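/- For every real number x with 0 ≤ x ≤ 1, K(x) ≤ c·x, where K(0) = 0, K(x) = ∫₀^∞ e^{−t} (t^x − 1)/(t − 1) dt for x ∈ (0,1], and c = ∫₀^∞ e^{−t} (ln t)/(t − 1) dt. -/

import Mathlib

open MeasureTheory

/-- The Kurepa function, defined for `0 ≤ x` by
`K(x) = ∫₀^∞ e^{−t} (t^x − 1)/(t − 1) dt`.  (For `x = 0` the integrand vanishes,
so this definition also gives `K(0) = 0`.) -/
noncomputable def kurepa (x : ℝ) : ℝ :=
  ∫ t in Set.Ioi (0 : ℝ), Real.exp (-t) * (t ^ x - 1) / (t - 1)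

/-- The constant `c = K′(0) = ∫₀^∞ e^{−t} (ln t)/(t − 1) dt`. -/
noncomputable def kurepaDerivZero : ℝ :=
  ∫ t in Set.Ioi (0 : ℝ), Real.exp (-t) * Real.log t / (t - 1)

namespace KurepaAux

open Real Set

/-! ### Elementary inequalities -/

/-- `2 log s ≤ s - 1/s` for `s ≥ 1`. -/
lemma two_log_le (s : ℝ) (hs : 1 ≤ s) : 2 * Real.log s ≤ s - 1 / s := by
  have h0 : (0:ℝ) < 1 := one_pos
  have key : AntitoneOn (fun u : ℝ => 2 * Real.log u - (u - 1 / u)) (Set.Ici 1) := by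
    apply antitoneOn_of_deriv_nonpos (convex_Ici 1)
    · apply ContinuousOn.sub
      · exact continuousOn_const.mul (Real.continuousOn_log.mono
          (fun u hu => by simp at hu ⊢; positivity))
      · exact (continuousOn_id.sub ((continuousOn_const).div continuousOn_id
          (fun u hu => by simp at hu; positivity)))
    · intro u hu
      rw [interior_Ici] at hu
      have hu0 : u ≠ 0 := by simp at hu; positivity
      apply DifferentiableAt.differentiableWithinAt
      apply DifferentiableAt.sub
      · exact (Real.differentiableAt_log hu0).const_mul 2
      · exact differentiableAt_id.sub ((differentiableAt_const 1).div differentiableAt_id hu0)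
    · intro u hu
      rw [interior_Ici] at hu
      have hu1 : (1:ℝ) < u := hu
      have hu0 : u ≠ 0 := by positivity
      have hd : HasDerivAt (fun u : ℝ => 2 * Real.log u - (u - 1 / u))
          (2 * u⁻¹ - (1 - (-(1 / u ^ 2)))) u := by
        have h1 : HasDerivAt (fun u : ℝ => Real.log u) u⁻¹ u := Real.hasDerivAt_log hu0
        have h2 : HasDerivAt (fun u : ℝ => 1 / u) (-(1 / u ^ 2)) u := by
          simpa using (hasDerivAt_inv hu0)
        exact ((h1.const_mul 2).sub ((hasDerivAt_id u).sub h2))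
      rw [hd.deriv]
      have : (2 * u⁻¹ - (1 - -(1 / u ^ 2))) = -((1 - 1/u)^2) := by
        field_simp
        ring
      rw [this]
      simpa using sq_nonneg (1 - 1/u)
  have h1 : (1:ℝ) ∈ Set.Ici (1:ℝ) := Set.self_mem_Ici
  have hs' : s ∈ Set.Ici (1:ℝ) := hs
  have := key h1 hs' hs
  simp [Real.log_one] at this
  rw [one_div]
  linarith

/-- For all `t > 0`, `0 ≤ log t / (t - 1)`. -/
lemma ratio_nonneg {t : ℝ} (ht : 0 < t) : 0 ≤ Real.log t / (t - 1) := by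
  rcases lt_trichotomy t 1 with h | h | h
  · rw [← neg_div_neg_eq]
    apply div_nonneg
    · have := Real.log_nonpos (le_of_lt ht) (le_of_lt h); linarith
    · linarith
  · simp [h]
  · apply div_nonneg (Real.log_nonneg (le_of_lt h)) (by linarith)

/-- For all `t > 0`, `log t / (t - 1) ≤ t ^ (-(1/2) : ℝ)`. -/
lemma ratio_le {t : ℝ} (ht : 0 < t) : Real.log t / (t - 1) ≤ t ^ (-(1/2) : ℝ) := by
  have hsq : Real.sqrt t > 0 := Real.sqrt_pos.2 ht
  have hrpow : t ^ (-(1/2) : ℝ) = 1 / Real.sqrt t := by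
    rw [Real.rpow_neg (le_of_lt ht), Real.sqrt_eq_rpow]
    exact (one_div _).symm
  rw [hrpow]
  have hts : Real.sqrt t * Real.sqrt t = t := Real.mul_self_sqrt (le_of_lt ht)
  have hlog : Real.log t = 2 * Real.log (Real.sqrt t) := by
    conv_lhs => rw [← hts]
    rw [Real.log_mul (ne_of_gt hsq) (ne_of_gt hsq)]
    ring
  rcases lt_trichotomy t 1 with h | h | h
  · -- t < 1 : sqrt t < 1; use two_log_le applied to 1 / sqrt t
    have hs1 : Real.sqrt t < 1 := by
      nlinarith [hts, hsq]
    have h2 : 2 * Real.log (1 / Real.sqrt t) ≤ 1 / Real.sqrt t - 1 / (1 / Real.sqrt t) := by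
      apply two_log_le
      rw [le_div_iff₀ hsq]; nlinarith
    rw [Real.log_div one_ne_zero (ne_of_gt hsq), Real.log_one] at h2
    have h3 : 1 / (1 / Real.sqrt t) = Real.sqrt t := by field_simp
    rw [h3] at h2
    -- h2 : 2 * (0 - log sqrt t) ≤ 1/sqrt t - sqrt t
    -- goal : log t / (t-1) ≤ 1 / sqrt t, t - 1 < 0
    rw [div_le_iff_of_neg (by linarith : t - 1 < 0)]
    rw [hlog]
    have hst : 1 / Real.sqrt t * (t - 1) = Real.sqrt t - 1 / Real.sqrt t := by
      rw [← hts]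
      field_simp
      try ring
      rw [Real.sqrt_sq hsq.le]
    rw [hst]
    linarith
  · rw [h]
    simp
  · have hs1 : 1 ≤ Real.sqrt t := by nlinarith [hts, hsq]
    have h2 := two_log_le (Real.sqrt t) hs1
    rw [div_le_iff₀ (by linarith : (0:ℝ) < t - 1)]
    rw [hlog]
    have hst : 1 / Real.sqrt t * (t - 1) = Real.sqrt t - 1 / Real.sqrt t := by
      rw [← hts]
      field_simp
      try ring
      rw [Real.sqrt_sq hsq.le]
    rw [hst]
    linarith

/-- `|t^x - 1| ≤ |t - 1|` for `t > 0`, `0 ≤ x ≤ 1`. -/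
lemma rpow_sub_one_abs_le {t x : ℝ} (ht : 0 < t) (hx : 0 ≤ x) (hx' : x ≤ 1) :
    |t ^ x - 1| ≤ |t - 1| := by
  rcases le_or_gt 1 t with h | h
  · have h1 : 1 ≤ t ^ x := Real.one_le_rpow h hx
    have h2 : t ^ x ≤ t := by
      calc t ^ x ≤ t ^ (1:ℝ) := Real.rpow_le_rpow_of_exponent_le h hx'
      _ = t := Real.rpow_one t
    rw [abs_of_nonneg (by linarith), abs_of_nonneg (by linarith)]
    linarith
  · have h1 : t ^ x ≤ 1 := Real.rpow_le_one (le_of_lt ht) (le_of_lt h) hx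
    have h2 : t ≤ t ^ x := by
      calc t = t ^ (1:ℝ) := (Real.rpow_one t).symm
      _ ≤ t ^ x := Real.rpow_le_rpow_of_exponent_ge ht (le_of_lt h) hx'
    rw [abs_of_nonpos (by linarith), abs_of_nonpos (by linarith)]
    linarith

/-! ### The key convexity inequality -/

lemma exp_convex {x v : ℝ} (hx : 0 ≤ x) (hx' : x ≤ 1) :
    Real.exp (x * v) ≤ 1 - x + x * Real.exp v := by
  have := convexOn_exp.2 (Set.mem_univ (0:ℝ)) (Set.mem_univ v)
    (by linarith : (0:ℝ) ≤ 1 - x) hx (by ring)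
  simpa [smul_eq_mul, Real.exp_zero] using this

lemma H_antitone {x : ℝ} (hx : 0 ≤ x) (hx' : x ≤ 1) :
    Antitone (fun v : ℝ =>
      (Real.exp (x * v) - 1 - x * v) - x ^ 2 * (Real.exp v - 1 - v)) := by
  apply antitone_of_hasDerivAt_nonpos
    (f' := fun v => (x * Real.exp (x * v) - x) - x ^ 2 * (Real.exp v - 1))
  · intro v
    have h3 : HasDerivAt (fun v : ℝ => x * v) x v := by
      simpa using (hasDerivAt_id v).const_mul x
    have h1 : HasDerivAt (fun v : ℝ => Real.exp (x * v)) (Real.exp (x * v) * x) v := h3.exp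
    have h2 : HasDerivAt (fun v : ℝ => Real.exp v - 1 - v) (Real.exp v - 1) v := by
      exact ((Real.hasDerivAt_exp v).sub_const 1).sub (hasDerivAt_id v)
    have h := ((h1.sub_const 1).sub h3).sub (h2.const_mul (x ^ 2))
    exact h.congr_deriv (by ring)
  · intro v
    simp only [Pi.zero_apply]
    have hc := exp_convex (v := v) hx hx'
    nlinarith [mul_le_mul_of_nonneg_left hc hx]

lemma key_pos {x v : ℝ} (hx : 0 ≤ x) (hx' : x ≤ 1) (hv : 0 ≤ v) :
    Real.exp (x * v) - 1 - x * v ≤ x ^ 2 * (Real.exp v - 1 - v) := by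
  have := H_antitone hx hx' hv
  simp [Real.exp_zero] at this
  linarith

lemma key_neg {x v : ℝ} (hx : 0 ≤ x) (hx' : x ≤ 1) (hv : v ≤ 0) :
    x ^ 2 * (Real.exp v - 1 - v) ≤ Real.exp (x * v) - 1 - x * v := by
  have := H_antitone hx hx' hv
  simp [Real.exp_zero] at this
  linarith

/-! ### The pointwise inequality for the main estimate -/

lemma pointwise_main {x : ℝ} (hx : 0 ≤ x) (hx' : x ≤ 1) {t : ℝ} (ht : 0 < t) :
    Real.exp (-t) * (t ^ x - 1) / (t - 1) ≤
      x * (Real.exp (-t) * Real.log t / (t - 1)) +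
        x ^ 2 * (Real.exp (-t) - Real.exp (-t) * Real.log t / (t - 1)) := by
  have hE : 0 < Real.exp (-t) := Real.exp_pos _
  rcases lt_trichotomy t 1 with h | h | h
  · -- t < 1
    have ht1 : t - 1 < 0 := by linarith
    have ht1' : t - 1 ≠ 0 := ne_of_lt ht1
    have hv : Real.log t ≤ 0 := Real.log_nonpos (le_of_lt ht) (le_of_lt h)
    have hk := key_neg hx hx' hv
    rw [Real.exp_log ht] at hk
    have hrp : t ^ x = Real.exp (x * Real.log t) := by
      rw [Real.rpow_def_of_pos ht, mul_comm]
    have hnum : x ^ 2 * (t - 1 - Real.log t) + x * Real.log t ≤ t ^ x - 1 := by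
      rw [hrp]; nlinarith [hk]
    have hexpand : x * (Real.exp (-t) * Real.log t / (t - 1)) +
        x ^ 2 * (Real.exp (-t) - Real.exp (-t) * Real.log t / (t - 1)) =
        Real.exp (-t) * (x * Real.log t + x ^ 2 * (t - 1 - Real.log t)) / (t - 1) := by
      field_simp
    rw [hexpand, div_le_div_right_of_neg ht1]
    apply mul_le_mul_of_nonneg_left _ (le_of_lt hE)
    linarith
  · subst h
    simp [Real.one_rpow]
    positivity
  · -- t > 1
    have ht1 : (0:ℝ) < t - 1 := by linarith
    have hv : 0 ≤ Real.log t := Real.log_nonneg (le_of_lt h)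
    have hk := key_pos hx hx' hv
    rw [Real.exp_log ht] at hk
    have hrp : t ^ x = Real.exp (x * Real.log t) := by
      rw [Real.rpow_def_of_pos ht, mul_comm]
    have hexpand : x * (Real.exp (-t) * Real.log t / (t - 1)) +
        x ^ 2 * (Real.exp (-t) - Real.exp (-t) * Real.log t / (t - 1)) =
        Real.exp (-t) * (x * Real.log t + x ^ 2 * (t - 1 - Real.log t)) / (t - 1) := by
      field_simp
    rw [hexpand, div_le_div_iff_of_pos_right ht1]
    apply mul_le_mul_of_nonneg_left _ (le_of_lt hE)
    rw [hrp]
    nlinarith [hk]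

/-! ### Integrability -/

lemma measurable_f : Measurable (fun t : ℝ => Real.exp (-t) * Real.log t / (t - 1)) := by
  exact ((Real.measurable_exp.comp measurable_neg).mul Real.measurable_log).div
    (measurable_id.sub measurable_const)

lemma integrable_f :
    IntegrableOn (fun t : ℝ => Real.exp (-t) * Real.log t / (t - 1)) (Set.Ioi 0) := by
  have hG := Real.GammaIntegral_convergent (s := 1/2) (by norm_num)
  have hG' : IntegrableOn (fun t : ℝ => Real.exp (-t) * t ^ (-(1/2) : ℝ)) (Set.Ioi 0) := by
    have : ((1:ℝ)/2 - 1) = -(1/2) := by norm_num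
    rwa [this] at hG
  apply hG'.integrable.mono
  · exact measurable_f.aestronglyMeasurable
  · filter_upwards [ae_restrict_mem measurableSet_Ioi] with t ht
    have ht0 : (0:ℝ) < t := ht
    have h1 : Real.exp (-t) * Real.log t / (t - 1) =
        Real.exp (-t) * (Real.log t / (t - 1)) := by ring
    rw [Real.norm_eq_abs, Real.norm_eq_abs, h1,
      abs_of_nonneg (mul_nonneg (le_of_lt (Real.exp_pos _)) (ratio_nonneg ht0)),
      abs_of_nonneg (mul_nonneg (le_of_lt (Real.exp_pos _)) (le_of_lt (Real.rpow_pos_of_pos ht0 _)))]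
    exact mul_le_mul_of_nonneg_left (ratio_le ht0) (le_of_lt (Real.exp_pos _))

lemma integrable_exp_neg : IntegrableOn (fun t : ℝ => Real.exp (-t)) (Set.Ioi 0) := by
  have := exp_neg_integrableOn_Ioi (0:ℝ) (b := 1) one_pos
  simpa using this

lemma integrable_P {x : ℝ} (hx : 0 ≤ x) (hx' : x ≤ 1) :
    IntegrableOn (fun t : ℝ => Real.exp (-t) * (t ^ x - 1) / (t - 1)) (Set.Ioi 0) := by
  apply integrable_exp_neg.integrable.mono
  · apply Measurable.aestronglyMeasurable
    exact ((Real.measurable_exp.comp measurable_neg).mul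
      ((measurable_id.pow_const x).sub measurable_const)).div
      (measurable_id.sub measurable_const)
  · filter_upwards [ae_restrict_mem measurableSet_Ioi] with t ht
    have ht0 : (0:ℝ) < t := ht
    rw [Real.norm_eq_abs, Real.norm_eq_abs, abs_of_nonneg (le_of_lt (Real.exp_pos _))]
    rcases eq_or_ne t 1 with rfl | htne
    · simp [Real.one_rpow]
      positivity
    · have ht1 : t - 1 ≠ 0 := by
        intro hh; apply htne; linarith
      rw [abs_div]
      rw [div_le_iff₀ (abs_pos.2 ht1)]
      rw [abs_mul]
      calc |Real.exp (-t)| * |t ^ x - 1| ≤ |Real.exp (-t)| * |t - 1| := by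
            apply mul_le_mul_of_nonneg_left (rpow_sub_one_abs_le ht0 hx hx') (abs_nonneg _)
        _ = Real.exp (-t) * |t - 1| := by rw [abs_of_nonneg (le_of_lt (Real.exp_pos _))]

/-! ### The lower bound `1 ≤ c` -/

/-- On `(0, 1]`, `log t ≤ -((1-t) + (1-t)^2/2 + (1-t)^3/3)`. -/
lemma log_le_cubic {t : ℝ} (ht : 0 < t) (ht1 : t ≤ 1) :
    Real.log t ≤ -((1 - t) + (1 - t) ^ 2 / 2 + (1 - t) ^ 3 / 3) := by
  have key : MonotoneOn
      (fun u : ℝ => Real.log u + ((1 - u) + (1 - u) ^ 2 / 2 + (1 - u) ^ 3 / 3))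
      (Set.Icc t 1) := by
    apply monotoneOn_of_deriv_nonneg (convex_Icc t 1)
    · apply ContinuousOn.add
      · exact Real.continuousOn_log.mono (by
          intro u hu
          simp at hu ⊢
          intro h0; linarith [hu.1])
      · fun_prop
    · intro u hu
      rw [interior_Icc] at hu
      have hu0 : u ≠ 0 := by have := hu.1; intro hh; rw [hh] at this; linarith
      apply DifferentiableAt.differentiableWithinAt
      apply DifferentiableAt.add (Real.differentiableAt_log hu0)
      fun_prop
    · intro u hu
      rw [interior_Icc] at hu
      have hu0 : (0:ℝ) < u := lt_trans ht hu.1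
      have hd : HasDerivAt
          (fun u : ℝ => Real.log u + ((1 - u) + (1 - u) ^ 2 / 2 + (1 - u) ^ 3 / 3))
          (u⁻¹ + (-1 + (2 * (1-u) * (-1)) / 2 + (3 * (1-u)^2 * (-1)) / 3)) u := by
        have h1 : HasDerivAt (fun u : ℝ => Real.log u) u⁻¹ u := Real.hasDerivAt_log (ne_of_gt hu0)
        have h2 : HasDerivAt (fun u : ℝ => 1 - u) (-1) u := by
          simpa using (hasDerivAt_id u).const_sub 1
        have h3 : HasDerivAt (fun u : ℝ => (1 - u) ^ 2) (2 * (1-u) ^ 1 * (-1)) u := by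
          exact (HasDerivAt.pow h2 2).congr_deriv (by norm_num)
        have h4 : HasDerivAt (fun u : ℝ => (1 - u) ^ 3) (3 * (1-u) ^ 2 * (-1)) u := by
          exact (HasDerivAt.pow h2 3).congr_deriv (by norm_num)
        have := h1.add ((h2.add (h3.div_const 2)).add (h4.div_const 3))
        exact this.congr_deriv (by ring)
      rw [hd.deriv]
      have hcalc : u⁻¹ + (-1 + (2 * (1-u) * (-1)) / 2 + (3 * (1-u)^2 * (-1)) / 3)
          = (1 - u)^3 / u := by
        field_simp
        ring
      rw [hcalc]
      apply div_nonneg _ (le_of_lt hu0)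
      nlinarith [hu.2]
  have h1 := key (Set.left_mem_Icc.2 ht1) (Set.right_mem_Icc.2 ht1) ht1
  simp [Real.log_one] at h1
  linarith

/-- `1 - 1/t ≤ log t` for `t > 0`. -/
lemma one_sub_inv_le_log {t : ℝ} (ht : 0 < t) : 1 - 1 / t ≤ Real.log t := by
  have := Real.log_le_sub_one_of_pos (show (0:ℝ) < 1/t by positivity)
  rw [Real.log_div one_ne_zero (ne_of_gt ht), Real.log_one] at this
  have h2 : 1 / t - 1 ≥ 0 - Real.log t := by linarith
  linarith

lemma one_le_c : 1 ≤ kurepaDerivZero := by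
  set f : ℝ → ℝ := fun t => Real.exp (-t) * Real.log t / (t - 1) with hf
  -- split the integral
  have hsplit1 : Set.Ioc (0:ℝ) 1 ∪ Set.Ioi 1 = Set.Ioi 0 := Set.Ioc_union_Ioi_eq_Ioi zero_le_one
  have hsplit2 : Set.Ioc (1:ℝ) 2 ∪ Set.Ioi 2 = Set.Ioi 1 := Set.Ioc_union_Ioi_eq_Ioi one_le_two
  have hi1 : IntegrableOn f (Set.Ioc 0 1) := integrable_f.mono_set (by
    rw [← hsplit1]; exact Set.subset_union_left)
  have hiIoi1 : IntegrableOn f (Set.Ioi 1) := integrable_f.mono_set (by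
    rw [← hsplit1]; exact Set.subset_union_right)
  have hi2 : IntegrableOn f (Set.Ioc 1 2) := hiIoi1.mono_set (by
    rw [← hsplit2]; exact Set.subset_union_left)
  have hiIoi2 : IntegrableOn f (Set.Ioi 2) := hiIoi1.mono_set (by
    rw [← hsplit2]; exact Set.subset_union_right)
  have heq1 : kurepaDerivZero = (∫ t in Set.Ioc (0:ℝ) 1, f t) + (∫ t in Set.Ioi (1:ℝ), f t) := by
    rw [kurepaDerivZero, ← hsplit1]
    exact setIntegral_union (Set.Ioc_disjoint_Ioi le_rfl) measurableSet_Ioi hi1 hiIoi1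
  have heq2 : (∫ t in Set.Ioi (1:ℝ), f t)
      = (∫ t in Set.Ioc (1:ℝ) 2, f t) + (∫ t in Set.Ioi (2:ℝ), f t) := by
    rw [← hsplit2]
    exact setIntegral_union (Set.Ioc_disjoint_Ioi le_rfl) measurableSet_Ioi hi2 hiIoi2
  -- the three pieces
  have hpiece3 : 0 ≤ ∫ t in Set.Ioi (2:ℝ), f t := by
    apply setIntegral_nonneg measurableSet_Ioi
    intro t ht
    have ht0 : (0:ℝ) < t := by simp at ht; linarith
    simp only [hf]
    have := ratio_nonneg ht0
    have hE := Real.exp_pos (-t)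
    rw [mul_div_assoc]
    positivity
  -- piece on (1,2]: f ≥ exp(-t)*(2-t)
  have hpiece2 : Real.exp (-2) ≤ ∫ t in Set.Ioc (1:ℝ) 2, f t := by
    have hFTC : (∫ t in Set.Ioc (1:ℝ) 2, Real.exp (-t) * (2 - t)) = Real.exp (-2) := by
      rw [← intervalIntegral.integral_of_le one_le_two]
      have : ∀ u ∈ Set.uIcc (1:ℝ) 2, HasDerivAt (fun t => Real.exp (-t) * (t - 1))
          (Real.exp (-u) * (2 - u)) u := by
        intro u _
        have h1 : HasDerivAt (fun t : ℝ => Real.exp (-t)) (-Real.exp (-u)) u := by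
          exact ((Real.hasDerivAt_exp (-u)).comp u ((hasDerivAt_id u).neg)).congr_deriv (by simp)
        have h2 : HasDerivAt (fun t : ℝ => t - 1) 1 u := (hasDerivAt_id u).sub_const 1
        have := h1.mul h2
        exact this.congr_deriv (by ring)
      rw [intervalIntegral.integral_eq_sub_of_hasDerivAt this (by
        apply Continuous.intervalIntegrable
        fun_prop)]
      norm_num
    rw [← hFTC]
    apply setIntegral_mono_on
      ((by fun_prop : Continuous fun t : ℝ => Real.exp (-t) * (2 - t)).integrableOn_Ioc)
      hi2 measurableSet_Ioc
    intro t ht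
    obtain ⟨ht1, ht2⟩ := ht
    have ht0 : (0:ℝ) < t := by linarith
    have htm1 : (0:ℝ) < t - 1 := by linarith
    have hlog : 1 - 1/t ≤ Real.log t := one_sub_inv_le_log ht0
    have hratio : 2 - t ≤ Real.log t / (t - 1) := by
      rw [le_div_iff₀ htm1]
      have h5 : (1 - 1/t) - (2 - t) * (t - 1) = (t - 1)^3 / t := by
        field_simp
        ring
      have h6 : (0:ℝ) ≤ (t - 1)^3 / t := by positivity
      linarith
    have hE := Real.exp_pos (-t)
    simp only [hf]
    rw [mul_div_assoc]
    exact mul_le_mul_of_nonneg_left hratio (le_of_lt hE)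
  -- piece on (0,1]
  have hpiece1 : 4/3 - 7/6 * Real.exp (-1) ≤ ∫ t in Set.Ioc (0:ℝ) 1, f t := by
    have hFTC : (∫ t in Set.Ioo (0:ℝ) 1, Real.exp (-t) * (11/6 - 7/6*t + t^2/3))
        = 4/3 - 7/6 * Real.exp (-1) := by
      rw [← integral_Ioc_eq_integral_Ioo, ← intervalIntegral.integral_of_le zero_le_one]
      have : ∀ u ∈ Set.uIcc (0:ℝ) 1, HasDerivAt
          (fun t => Real.exp (-t) * (-(t^2)/3 + t/2 - 4/3))
          (Real.exp (-u) * (11/6 - 7/6*u + u^2/3)) u := by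
        intro u _
        have h1 : HasDerivAt (fun t : ℝ => Real.exp (-t)) (-Real.exp (-u)) u := by
          exact ((Real.hasDerivAt_exp (-u)).comp u ((hasDerivAt_id u).neg)).congr_deriv (by simp)
        have h2 : HasDerivAt (fun t : ℝ => -(t^2)/3 + t/2 - 4/3) (-(2*u)/3 + 1/2) u := by
          have hp : HasDerivAt (fun t : ℝ => t^2) (2*u) u := by
            simpa using hasDerivAt_pow 2 u
          have := ((hp.neg.div_const 3).add ((hasDerivAt_id u).div_const 2)).sub_const (4/3)
          exact this
        have := h1.mul h2
        exact this.congr_deriv (by ring)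
      rw [intervalIntegral.integral_eq_sub_of_hasDerivAt this (by
        apply Continuous.intervalIntegrable
        fun_prop)]
      norm_num
      ring
    rw [show (∫ t in Set.Ioc (0:ℝ) 1, f t) = ∫ t in Set.Ioo (0:ℝ) 1, f t from
      integral_Ioc_eq_integral_Ioo, ← hFTC]
    apply setIntegral_mono_on
      (((by fun_prop : Continuous fun t : ℝ =>
        Real.exp (-t) * (11/6 - 7/6*t + t^2/3)).integrableOn_Ioc).mono_set
        Set.Ioo_subset_Ioc_self)
      (hi1.mono_set Set.Ioo_subset_Ioc_self) measurableSet_Ioo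
    intro t ht
    obtain ⟨ht0, ht1⟩ := ht
    have htm1 : t - 1 < 0 := by linarith
    have hlog := log_le_cubic ht0 (le_of_lt ht1)
    have hratio : 11/6 - 7/6*t + t^2/3 ≤ Real.log t / (t - 1) := by
      rw [le_div_iff_of_neg htm1]
      have hexp : (11/6 - 7/6*t + t^2/3) * (t - 1)
          = -((1 - t) + (1 - t)^2/2 + (1 - t)^3/3) := by ring
      rw [hexp]
      exact hlog
    have hE := Real.exp_pos (-t)
    simp only [hf]
    rw [mul_div_assoc]
    exact mul_le_mul_of_nonneg_left hratio (le_of_lt hE)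
  -- combine
  have hnum : 1 ≤ 4/3 - 7/6 * Real.exp (-1) + Real.exp (-2) := by
    have hEpos : (0:ℝ) < Real.exp 1 := Real.exp_pos 1
    have hE : (2:ℝ) ≤ Real.exp 1 := by
      have := Real.exp_one_gt_d9
      linarith
    have he1 : Real.exp (-1) = (Real.exp 1)⁻¹ := Real.exp_neg 1
    have he2 : Real.exp (-2) = ((Real.exp 1)⁻¹)^2 := by
      rw [show (-2:ℝ) = (-1) + (-1) by norm_num, Real.exp_add, he1]
      ring
    have hu0 : (0:ℝ) < (Real.exp 1)⁻¹ := by positivity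
    have hu : (Real.exp 1)⁻¹ ≤ 1/2 := by
      rw [show (1:ℝ)/2 = 2⁻¹ by norm_num]
      exact inv_anti₀ two_pos hE
    rw [he1, he2]
    nlinarith [mul_nonneg (by linarith : (0:ℝ) ≤ 1/2 - (Real.exp 1)⁻¹)
      (by linarith : (0:ℝ) ≤ 2/3 - (Real.exp 1)⁻¹)]
  linarith [hpiece1, hpiece2, hpiece3, hnum, heq1, heq2]

end KurepaAux

theorem kurepa_le (x : ℝ) (hx : 0 ≤ x) (hx' : x ≤ 1) :
    kurepa x ≤ kurepaDerivZero * x := by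
  have hc := KurepaAux.one_le_c
  have hf := KurepaAux.integrable_f
  have hexp := KurepaAux.integrable_exp_neg
  have hP := KurepaAux.integrable_P hx hx'
  have hQ : IntegrableOn (fun t : ℝ =>
      x * (Real.exp (-t) * Real.log t / (t - 1)) +
        x ^ 2 * (Real.exp (-t) - Real.exp (-t) * Real.log t / (t - 1))) (Set.Ioi 0) :=
    (hf.const_mul x).add ((hexp.sub hf).const_mul (x ^ 2))
  have hmono : kurepa x ≤ ∫ t in Set.Ioi (0:ℝ),
      (x * (Real.exp (-t) * Real.log t / (t - 1)) +
        x ^ 2 * (Real.exp (-t) - Real.exp (-t) * Real.log t / (t - 1))) := by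
    rw [kurepa]
    exact setIntegral_mono_on hP hQ measurableSet_Ioi
      (fun t ht => KurepaAux.pointwise_main hx hx' ht)
  have hQval : (∫ t in Set.Ioi (0:ℝ),
      (x * (Real.exp (-t) * Real.log t / (t - 1)) +
        x ^ 2 * (Real.exp (-t) - Real.exp (-t) * Real.log t / (t - 1))))
      = x * kurepaDerivZero + x ^ 2 * (1 - kurepaDerivZero) := by
    have hA : IntegrableOn (fun t : ℝ =>
        x * (Real.exp (-t) * Real.log t / (t - 1))) (Set.Ioi 0) := hf.const_mul x
    have hsub : IntegrableOn (fun t : ℝ =>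
        Real.exp (-t) - Real.exp (-t) * Real.log t / (t - 1)) (Set.Ioi 0) := hexp.sub hf
    have hB : IntegrableOn (fun t : ℝ =>
        x ^ 2 * (Real.exp (-t) - Real.exp (-t) * Real.log t / (t - 1))) (Set.Ioi 0) :=
      hsub.const_mul (x ^ 2)
    rw [integral_add hA hB, integral_const_mul, integral_const_mul, integral_sub hexp hf,
      integral_exp_neg_Ioi_zero]
    rfl
  rw [hQval] at hmono
  nlinarith [sq_nonneg x, hmono, hc, hx]
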